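/- Suppose the basic assumption and (A2) hold. Then for every x ∈ D(T^∞), one has limsup_{n→∞} ‖T^n x‖^{1/n} ≤ sup{|a(λ)| : λ ∈ supp F x}, in the extended nonnegative reals [0,∞]. -/

import Mathlib

open Filter
open scoped ENNReal Topology

noncomputable section

variable {X : Type*} [NormedAddCommGroup X] [NormedSpace ℂ X]

/-- `y` is the orbit of `x` under the partially defined operator `T` : `y n = T^n x`;
its existence witnesses `x ∈ D(T^∞)`. -/
def IsIterSeq (T : X →ₗ.[ℂ] X) (x : X) (y : ℕ → X) : Prop :=
  y 0 = x ∧ ∀ n : ℕ, ∃ hn : y n ∈ T.domain, T ⟨y n, hn⟩ = y (n + 1)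

/-- Suppose the basic assumption (`F` linear, injective on the domain of `T_e`, diagonalising
`T_e` with eigenvalue function `a`) holds and (A2) holds: there is a family of linear maps
`G λ : L λ → X` with values in the domain `D` of `T`, such that for every `x ∈ D` the family
`(G λ (F x λ))` is absolutely summable in `X` with sum `x`. Then for every `x ∈ D(T^∞)`
(with orbit `y n = T^n x`),
`limsup ‖T^n x‖^{1/n} ≤ sup {|a λ| : λ ∈ supp F x}` in `[0,∞]`. -/
theorem stmt3 [CompleteSpace X] {Λ : Type*} [Nonempty Λ] {L : Λ → Type*}
    [∀ l, NormedAddCommGroup (L l)] [∀ l, NormedSpace ℂ (L l)]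
    (T Te : X →ₗ.[ℂ] X) (hTTe : T ≤ Te)
    (F : X →ₗ[ℂ] ∀ l, L l) (hinj : Set.InjOn F (Te.domain : Set X))
    (a : Λ → ℂ)
    (hdiag : ∀ (x : Te.domain) (l : Λ), F (Te x) l = a l • F (x : X) l)
    (G : ∀ l : Λ, L l →ₗ[ℂ] X) (hGD : ∀ (l : Λ) (v : L l), G l v ∈ T.domain)
    (hA2 : ∀ x : T.domain, Summable (fun l : Λ => ‖G l (F (x : X) l)‖) ∧
      HasSum (fun l : Λ => G l (F (x : X) l)) (x : X))
    (x : X) (y : ℕ → X) (hy : IsIterSeq T x y) :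
    Filter.limsup (fun n : ℕ => (‖y n‖₊ : ℝ≥0∞) ^ (1 / (n : ℝ))) atTop ≤
      ⨆ l : Λ, ⨆ _ : F x l ≠ 0, (‖a l‖₊ : ℝ≥0∞) := by
  set M : ℝ≥0∞ := ⨆ l : Λ, ⨆ _ : F x l ≠ 0, (‖a l‖₊ : ℝ≥0∞) with hMdef
  rcases eq_or_ne M ⊤ with hMtop | hMtop
  · rw [hMtop]; exact le_top
  have hdom : ∀ n, y n ∈ T.domain := fun n => (hy.2 n).choose
  have hF : ∀ n l, F (y n) l = (a l) ^ n • F x l := by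
    intro n
    induction n with
    | zero => intro l; simp [hy.1]
    | succ n ih =>
      intro l
      obtain ⟨hn, heq⟩ := hy.2 n
      have hmem : y n ∈ Te.domain := hTTe.1 hn
      have hTeq : T ⟨y n, hn⟩ = Te ⟨y n, hmem⟩ := hTTe.2 rfl
      rw [← heq, hTeq, hdiag ⟨y n, hmem⟩ l, ih l, smul_smul]
      congr 1
      ring
  have hx0 : x ∈ T.domain := hy.1 ▸ hdom 0
  set Mr : ℝ := M.toReal with hMr
  have hMr0 : (0:ℝ) ≤ Mr := ENNReal.toReal_nonneg
  have hM' : ∀ l, F x l ≠ 0 → ‖a l‖ ≤ Mr := by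
    intro l hl
    have h1 : (‖a l‖₊ : ℝ≥0∞) ≤ M :=
      le_iSup₂ (f := fun l (_ : F x l ≠ 0) => (‖a l‖₊ : ℝ≥0∞)) l hl
    have h2 := ENNReal.toReal_mono hMtop h1
    simpa using h2
  set C : ℝ := ∑' l, ‖G l (F x l)‖ with hC
  have hC0 : (0:ℝ) ≤ C := tsum_nonneg fun l => norm_nonneg _
  have hsumx := hA2 ⟨x, hx0⟩
  have key : ∀ n, ‖y n‖ ≤ C * Mr ^ n := by
    intro n
    have hs := hA2 ⟨y n, hdom n⟩
    have h1 : ‖y n‖ ≤ ∑' l, ‖G l (F (y n) l)‖ := by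
      calc ‖y n‖ = ‖∑' l, G l (F (y n) l)‖ := by rw [hs.2.tsum_eq]
        _ ≤ ∑' l, ‖G l (F (y n) l)‖ := norm_tsum_le_tsum_norm hs.1
    have h2 : ∀ l, ‖G l (F (y n) l)‖ ≤ Mr ^ n * ‖G l (F x l)‖ := by
      intro l
      have he : G l (F (y n) l) = (a l ^ n) • G l (F x l) := by
        rw [hF n l, map_smul]
      rw [he, norm_smul, norm_pow]
      rcases eq_or_ne (F x l) 0 with h0 | h0
      · simp [h0]
      · exact mul_le_mul_of_nonneg_right
          (pow_le_pow_left₀ (norm_nonneg _) (hM' l h0) n) (norm_nonneg _)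
    calc ‖y n‖ ≤ ∑' l, ‖G l (F (y n) l)‖ := h1
      _ ≤ ∑' l, Mr ^ n * ‖G l (F x l)‖ := Summable.tsum_le_tsum h2 hs.1 (hsumx.1.mul_left _)
      _ = Mr ^ n * C := tsum_mul_left
      _ = C * Mr ^ n := mul_comm _ _
  set Cc : ℝ≥0∞ := ENNReal.ofReal C with hCc
  have hCctop : Cc ≠ ⊤ := ENNReal.ofReal_ne_top
  have key2 : ∀ n, (‖y n‖₊ : ℝ≥0∞) ≤ Cc * M ^ n := by
    intro n
    have hco : (‖y n‖₊ : ℝ≥0∞) = ENNReal.ofReal ‖y n‖ :=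
      (ofReal_norm _).symm
    rw [hco]
    calc ENNReal.ofReal ‖y n‖ ≤ ENNReal.ofReal (C * Mr ^ n) :=
          ENNReal.ofReal_le_ofReal (key n)
      _ = Cc * ENNReal.ofReal (Mr ^ n) := ENNReal.ofReal_mul hC0
      _ = Cc * (ENNReal.ofReal Mr) ^ n := by rw [ENNReal.ofReal_pow hMr0]
      _ = Cc * M ^ n := by rw [hMr, ENNReal.ofReal_toReal hMtop]
  rcases eq_or_ne Cc 0 with hCc0 | hCc0
  · have hev : ∀ᶠ n : ℕ in atTop, (‖y n‖₊ : ℝ≥0∞) ^ (1 / (n : ℝ)) ≤ M := by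
      filter_upwards [eventually_ge_atTop 1] with n hn
      have h0 : (‖y n‖₊ : ℝ≥0∞) = 0 :=
        le_antisymm (by simpa [hCc0] using key2 n) zero_le
      have hn' : (0:ℝ) < n := by exact_mod_cast hn
      rw [h0, ENNReal.zero_rpow_of_pos (by positivity)]
      exact zero_le
    exact limsup_le_of_le (by isBoundedDefault) hev
  · have hev : ∀ᶠ n : ℕ in atTop,
        (‖y n‖₊ : ℝ≥0∞) ^ (1 / (n : ℝ)) ≤ Cc ^ (1 / (n : ℝ)) * M := by
      filter_upwards [eventually_ge_atTop 1] with n hn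
      have hn' : (0:ℝ) < n := by exact_mod_cast hn
      calc (‖y n‖₊ : ℝ≥0∞) ^ (1 / (n : ℝ)) ≤ (Cc * M ^ n) ^ (1 / (n : ℝ)) :=
            ENNReal.rpow_le_rpow (key2 n) (by positivity)
        _ = Cc ^ (1 / (n : ℝ)) * (M ^ n) ^ (1 / (n : ℝ)) :=
            ENNReal.mul_rpow_of_nonneg _ _ (by positivity)
        _ = Cc ^ (1 / (n : ℝ)) * M := by
            rw [← ENNReal.rpow_natCast M n, ← ENNReal.rpow_mul,
              mul_one_div, div_self hn'.ne', ENNReal.rpow_one]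
    have htend : Tendsto (fun n : ℕ => Cc ^ (1 / (n : ℝ)) * M) atTop (𝓝 M) := by
      have h2 : Tendsto (fun n : ℕ => Cc ^ (1 / (n : ℝ))) atTop (𝓝 1) := by
        lift Cc to NNReal using hCctop with c hc
        have hc0 : c ≠ 0 := by
          simpa using hCc0
        have hnn : Tendsto (fun n : ℕ => c ^ (1 / (n : ℝ))) atTop (𝓝 (c ^ (0:ℝ))) :=
          tendsto_const_nhds.nnrpow tendsto_one_div_atTop_nhds_zero_nat (Or.inl hc0)
        rw [NNReal.rpow_zero] at hnn
        have := ENNReal.tendsto_coe.2 hnn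
        refine this.congr fun n => ?_
        rw [← ENNReal.coe_rpow_of_nonneg _ (by positivity)]
      simpa using ENNReal.Tendsto.mul_const h2 (Or.inl one_ne_zero)
    calc limsup (fun n : ℕ => (‖y n‖₊ : ℝ≥0∞) ^ (1 / (n : ℝ))) atTop
        ≤ limsup (fun n : ℕ => Cc ^ (1 / (n : ℝ)) * M) atTop := limsup_le_limsup hev
      _ = M := htend.limsup_eq
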